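/- Let A, B, C ∈ ℝ with C ≠ 0. If p = (x,y,z) satisfies z = ½(1 − x² − y²) and Ax + By + Cz = 0, then (x,y) ≠ (0,0), and the point (X,Y) = (x,y)/(x²+y²) satisfies (X + A/C)² + (Y + B/C)² = 1 + (A² + B²)/C². Thus the stereographic image of an r-geodesic of Σ² not through the North pole is contained in a circle whose radius R and center 𝒞 = (−A/C, −B/C) satisfy R² = 1 + |𝒞|². -/

import Mathlib

/-- If C ≠ 0 and p = (x,y,z) lies on the parabolic unit sphere z = ½(1 − x² − y²) and on
the plane Ax + By + Cz = 0 through the center, then (x,y) ≠ (0,0) and the stereographic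
image (X,Y) = (x,y)/(x²+y²) lies on the circle of center 𝒞 = (−A/C, −B/C) and radius R
with R² = 1 + |𝒞|². -/
theorem stmt4 (A B C x y z : ℝ) (hC : C ≠ 0)
    (hS : z = (1 - x ^ 2 - y ^ 2) / 2)
    (hP : A * x + B * y + C * z = 0) :
    (x, y) ≠ (0, 0) ∧
    (x / (x ^ 2 + y ^ 2) + A / C) ^ 2 + (y / (x ^ 2 + y ^ 2) + B / C) ^ 2 =
      1 + (A ^ 2 + B ^ 2) / C ^ 2 := by
  have hne : (x, y) ≠ (0, 0) := by
    intro h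
    obtain ⟨hx, hy⟩ := Prod.mk.injEq .. ▸ h
    subst hx hy hS
    simp at hP
    exact hC hP
  have hs : x ^ 2 + y ^ 2 ≠ 0 := by
    intro h
    have hx : x = 0 := by nlinarith [sq_nonneg x, sq_nonneg y]
    have hy : y = 0 := by nlinarith [sq_nonneg x, sq_nonneg y]
    exact hne (by simp [hx, hy])
  refine ⟨hne, ?_⟩
  have key : A * x + B * y = C * (x ^ 2 + y ^ 2 - 1) / 2 := by rw [hS] at hP; linarith
  field_simp
  linear_combination (2 * C * (x ^ 2 + y ^ 2)) * key
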